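/- Asymptotic stability of the origin (Corollary 1): in the self-triggered value-function setting, assume additionally that each P^{(i)} is positive definite and that p* = γ (alternatively, that α = 0 with α ≥ 0 allowed). Let x : ℕ → ℝⁿ and i : ℕ → I⁰ be such that for every n, i(n) attains the minimum defining V(x(n)) and x(n+1) = M^{(i(n))} x(n). Then x(n) → 0 as n → ∞. -/

import Mathlib

open Matrix Finset Filter

lemma posDef_coercive {n : ℕ} {A : Matrix (Fin n) (Fin n) ℝ} (hA : A.PosDef) :
    ∃ c > 0, ∀ v : Fin n → ℝ, c * ‖v‖ ^ 2 ≤ v ⬝ᵥ (A *ᵥ v) := by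
  have key : ∀ v : Fin n → ℝ, v ≠ 0 → 0 < v ⬝ᵥ (A *ᵥ v) := by
    intro v hv
    simpa using hA.dotProduct_mulVec_pos hv
  rcases Nat.eq_zero_or_pos n with h | h
  · subst h
    refine ⟨1, one_pos, fun v => ?_⟩
    have hv : v = 0 := Subsingleton.elim _ _
    rw [hv, norm_zero]
    simp
  · haveI : Nonempty (Fin n) := ⟨⟨0, h⟩⟩
    have hconts : Continuous fun v : Fin n → ℝ => v ⬝ᵥ (A *ᵥ v) :=
      continuous_id.dotProduct (continuous_const.matrix_mulVec continuous_id)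
    have hsph : (Metric.sphere (0 : Fin n → ℝ) 1).Nonempty :=
      NormedSpace.sphere_nonempty.mpr zero_le_one
    obtain ⟨u, hu, hmin⟩ :=
      (isCompact_sphere (0 : Fin n → ℝ) 1).exists_isMinOn hsph hconts.continuousOn
    have hu1 : ‖u‖ = 1 := by simpa using hu
    have hune : u ≠ 0 := by
      intro h0; rw [h0, norm_zero] at hu1; norm_num at hu1
    refine ⟨u ⬝ᵥ (A *ᵥ u), key u hune, fun v => ?_⟩
    by_cases hv : v = 0
    · simp [hv]
    · set a : ℝ := ‖v‖ with ha_def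
      have ha : 0 < a := norm_pos_iff.mpr hv
      have hmem : a⁻¹ • v ∈ Metric.sphere (0 : Fin n → ℝ) 1 := by
        simp [norm_smul, abs_of_pos ha, inv_mul_cancel₀ ha.ne']
        exact inv_mul_cancel₀ ha.ne'
      have hle : u ⬝ᵥ (A *ᵥ u) ≤ (a⁻¹ • v) ⬝ᵥ (A *ᵥ (a⁻¹ • v)) := hmin hmem
      have hq : (a⁻¹ • v) ⬝ᵥ (A *ᵥ (a⁻¹ • v)) = a⁻¹ * (a⁻¹ * (v ⬝ᵥ (A *ᵥ v))) := by
        rw [mulVec_smul, smul_dotProduct, dotProduct_smul, smul_eq_mul, smul_eq_mul]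
      rw [hq] at hle
      have h2 : a⁻¹ * (a⁻¹ * (v ⬝ᵥ (A *ᵥ v))) * a ^ 2 = v ⬝ᵥ (A *ᵥ v) := by
        rw [sq]
        field_simp
      calc u ⬝ᵥ (A *ᵥ u) * a ^ 2 ≤ a⁻¹ * (a⁻¹ * (v ⬝ᵥ (A *ᵥ v))) * a ^ 2 :=
            mul_le_mul_of_nonneg_right hle (sq_nonneg a)
        _ = v ⬝ᵥ (A *ᵥ v) := h2


/-- Corollary 1: asymptotic stability of the origin for the
single loop self-triggered MPC, assuming each P⁽ⁱ⁾ is positive definite and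
either p* = γ or α = 0. -/
theorem self_triggered_asymptotic_stability {n : ℕ}
    (I0 : Finset ℕ) (hne : I0.Nonempty) (hpos : ∀ i ∈ I0, 0 < i)
    (γ : ℕ) (hγ : γ = I0.max' hne)
    (pstar : ℕ) (hpstar : pstar ∈ I0)
    (α : ℝ) (hα : 0 ≤ α)
    (P : ℕ → Matrix (Fin n) (Fin n) ℝ) (hP : ∀ i ∈ I0, (P i).PosDef)
    (M : ℕ → Matrix (Fin n) (Fin n) ℝ)
    (ε : ℝ) (hε0 : 0 < ε) (hε1 : ε ≤ 1)
    (hcontr : ∀ i ∈ I0, ((1 - ε) • P i - (M i)ᵀ * P pstar * M i).PosSemidef)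
    (hcase : pstar = γ ∨ α = 0)
    (V : (Fin n → ℝ) → ℝ)
    (hV : ∀ x : Fin n → ℝ, V x = I0.inf' hne (fun i => α / (i : ℝ) + x ⬝ᵥ (P i *ᵥ x)))
    (x : ℕ → Fin n → ℝ) (idx : ℕ → ℕ)
    (hidx : ∀ k, idx k ∈ I0)
    (hattain : ∀ k, α / (idx k : ℝ) + x k ⬝ᵥ (P (idx k) *ᵥ x k) = V (x k))
    (hdyn : ∀ k, x (k + 1) = M (idx k) *ᵥ x k) :
    Tendsto x atTop (nhds 0) := by
  set q : ℕ → ℝ := fun k => x k ⬝ᵥ (P (idx k) *ᵥ x k) with hq_def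
  set W : ℕ → ℝ := fun k => V (x k) - α / (γ : ℝ) with hW_def
  have hγmem : γ ∈ I0 := hγ ▸ I0.max'_mem hne
  have hγpos : 0 < γ := hpos γ hγmem
  have hidxle : ∀ k, (idx k : ℝ) ≤ (γ : ℝ) := fun k => by
    exact_mod_cast hγ ▸ I0.le_max' (idx k) (hidx k)
  have hidxpos : ∀ k, (0 : ℝ) < (idx k : ℝ) := fun k => by
    exact_mod_cast hpos (idx k) (hidx k)
  have heq : α / (pstar : ℝ) = α / (γ : ℝ) := by
    rcases hcase with h | h
    · rw [h]
    · simp [h]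
  have hdivle : ∀ k, α / (γ : ℝ) ≤ α / (idx k : ℝ) := fun k =>
    div_le_div_of_nonneg_left hα (hidxpos k) (hidxle k) |>.trans_eq rfl
  have hqnonneg : ∀ k, 0 ≤ q k := fun k => by
    simpa using (hP (idx k) (hidx k)).posSemidef.dotProduct_mulVec_nonneg (x k)
  have hqW : ∀ k, q k ≤ W k := by
    intro k
    have h1 : V (x k) = α / (idx k : ℝ) + q k := (hattain k).symm
    have := hdivle k
    simp only [hW_def, h1]
    linarith
  have h1ε : (0 : ℝ) ≤ 1 - ε := by linarith
  have hstep : ∀ k, W (k + 1) ≤ (1 - ε) * W k := by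
    intro k
    have hVle : V (x (k + 1)) ≤ α / (pstar : ℝ) + x (k+1) ⬝ᵥ (P pstar *ᵥ x (k+1)) := by
      rw [hV]
      exact Finset.inf'_le _ hpstar
    have hkey : x (k+1) ⬝ᵥ (P pstar *ᵥ x (k+1)) ≤ (1 - ε) * q k := by
      rw [hdyn k]
      have h0 := (hcontr (idx k) (hidx k)).dotProduct_mulVec_nonneg (x k)
      simp only [star_trivial, sub_mulVec, dotProduct_sub, smul_mulVec,
        dotProduct_smul, smul_eq_mul] at h0
      have h1 : x k ⬝ᵥ (((M (idx k))ᵀ * P pstar * M (idx k)) *ᵥ x k)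
          = (M (idx k) *ᵥ x k) ⬝ᵥ (P pstar *ᵥ (M (idx k) *ᵥ x k)) := by
        rw [← mulVec_mulVec, ← mulVec_mulVec, dotProduct_mulVec, vecMul_transpose]
      rw [← h1]
      linarith
    have : V (x (k+1)) ≤ α / (γ : ℝ) + (1 - ε) * q k := by
      rw [← heq]; linarith
    have h3 : W (k + 1) ≤ (1 - ε) * q k := by
      simp only [hW_def]; linarith
    exact h3.trans (mul_le_mul_of_nonneg_left (hqW k) h1ε)
  have hWgeo : ∀ k, W k ≤ (1 - ε) ^ k * W 0 := by
    intro k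
    induction k with
    | zero => simp
    | succ m ih =>
      calc W (m + 1) ≤ (1 - ε) * W m := hstep m
        _ ≤ (1 - ε) * ((1 - ε) ^ m * W 0) := mul_le_mul_of_nonneg_left ih h1ε
        _ = (1 - ε) ^ (m + 1) * W 0 := by ring
  -- uniform coercivity
  have hco : ∀ i ∈ I0, ∃ c > 0, ∀ v : Fin n → ℝ, c * ‖v‖ ^ 2 ≤ v ⬝ᵥ (P i *ᵥ v) :=
    fun i hi => posDef_coercive (hP i hi)
  choose! c hcpos hcle using hco
  set c0 : ℝ := I0.inf' hne c with hc0_def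
  have hc0pos : 0 < c0 := by
    rw [hc0_def, Finset.lt_inf'_iff]
    exact fun i hi => hcpos i hi
  have hbound : ∀ k, c0 * ‖x k‖ ^ 2 ≤ q k := by
    intro k
    refine le_trans (mul_le_mul_of_nonneg_right (Finset.inf'_le c (hidx k)) (sq_nonneg _)) ?_
    exact hcle (idx k) (hidx k) (x k)
  have hsq : ∀ k, ‖x k‖ ^ 2 ≤ (1 - ε) ^ k * (W 0 / c0) := by
    intro k
    have h1 : c0 * ‖x k‖ ^ 2 ≤ (1 - ε) ^ k * W 0 := (hbound k).trans ((hqW k).trans (hWgeo k))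
    rw [div_eq_mul_inv, ← mul_assoc]
    calc ‖x k‖ ^ 2 = c0 * ‖x k‖ ^ 2 * c0⁻¹ := by
          field_simp
      _ ≤ (1 - ε) ^ k * W 0 * c0⁻¹ :=
          mul_le_mul_of_nonneg_right h1 (inv_nonneg.mpr hc0pos.le)
  have htend : Tendsto (fun k => (1 - ε) ^ k * (W 0 / c0)) atTop (nhds 0) := by
    have h := tendsto_pow_atTop_nhds_zero_of_lt_one h1ε (by linarith : (1 : ℝ) - ε < 1)
    simpa using h.mul_const (W 0 / c0)
  have hsqt : Tendsto (fun k => ‖x k‖ ^ 2) atTop (nhds 0) :=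
    squeeze_zero (fun k => sq_nonneg _) hsq htend
  have hnt : Tendsto (fun k => ‖x k‖) atTop (nhds 0) := by
    have := (Real.continuous_sqrt.tendsto 0).comp hsqt
    simp only [Function.comp_def, Real.sqrt_zero] at this
    convert this using 2 with k
    rw [Real.sqrt_sq (norm_nonneg _)]
  exact tendsto_zero_iff_norm_tendsto_zero.mpr hnt
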